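/- Let H be a real Hilbert space, let α > 0, let (W_n) be bounded self-adjoint operators with W_n ≽ α·Id and sup_n‖W_n‖ < ∞, let C be a nonempty closed subset of H, and let (x_n) be a sequence in H satisfying the variable-metric quasi-Fejér condition: there exist summable nonnegative sequences (ε_n), (η_n) such that for all z ∈ C and all n, ‖x_{n+1} − z‖²_{W_{n+1}} ≤ (1+η_n)‖x_n − z‖²_{W_n} + ε_n. Then (x_n) converges strongly to a point in C if and only if liminf_n d_C(x_n) = 0. -/

import Mathlib

open RealInnerProductSpace

theorem stmt_16 {H : Type*} [NormedAddCommGroup H] [InnerProductSpace ℝ H] [CompleteSpace H]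
    (α : ℝ) (hα : 0 < α)
    (W : ℕ → H →L[ℝ] H) (hW : ∀ n, IsSelfAdjoint (W n))
    (hWα : ∀ n, ∀ x : H, α * ‖x‖ ^ 2 ≤ ⟪W n x, x⟫)
    (hWbdd : ∃ μ : ℝ, ∀ n, ‖W n‖ ≤ μ)
    (C : Set H) (hC : C.Nonempty) (hCcl : IsClosed C)
    (x : ℕ → H)
    (hfejer : ∃ ε η : ℕ → ℝ, (∀ n, 0 ≤ ε n) ∧ Summable ε ∧ (∀ n, 0 ≤ η n) ∧ Summable η ∧
      ∀ z ∈ C, ∀ n, ⟪W (n + 1) (x (n + 1) - z), x (n + 1) - z⟫ ≤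
        (1 + η n) * ⟪W n (x n - z), x n - z⟫ + ε n) :
    (∃ p ∈ C, Filter.Tendsto x Filter.atTop (nhds p)) ↔
      Filter.liminf (fun n => Metric.infDist (x n) C) Filter.atTop = 0 := by
  have hlim_of_tendsto : ∀ p : H, Filter.Tendsto x Filter.atTop (nhds p) →
      Filter.liminf (fun n => Metric.infDist (x n) C) Filter.atTop = Metric.infDist p C := by
    intro p hp
    have : Filter.Tendsto (fun n => Metric.infDist (x n) C) Filter.atTop
        (nhds (Metric.infDist p C)) :=
      ((Metric.continuous_infDist_pt C).tendsto p).comp hp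
    exact this.liminf_eq
  constructor
  · rintro ⟨p, hpC, hp⟩
    rw [hlim_of_tendsto p hp]
    exact Metric.infDist_zero_of_mem hpC
  · intro hliminf
    obtain ⟨ε, η, hε0, hεs, hη0, hηs, hQF⟩ := hfejer
    obtain ⟨μ, hμ⟩ := hWbdd
    set μ' : ℝ := μ + 1 with hμ'def
    have hμ'pos : 0 < μ' := lt_of_le_of_lt (norm_nonneg (W 0)) (by simp only [hμ'def]; linarith [hμ 0])
    have hμ' : ∀ n, ‖W n‖ ≤ μ' := fun n => (hμ n).trans (by simp [hμ'def])
    set φ : ℕ → H → ℝ := fun n z => ⟪W n (x n - z), x n - z⟫ with hφdef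
    have hφlb : ∀ n z, α * ‖x n - z‖ ^ 2 ≤ φ n z := fun n z => hWα n _
    have hφ0 : ∀ n z, 0 ≤ φ n z := fun n z => le_trans (by positivity) (hφlb n z)
    have hφub : ∀ n z, φ n z ≤ μ' * ‖x n - z‖ ^ 2 := by
      intro n z
      calc φ n z ≤ ‖W n (x n - z)‖ * ‖x n - z‖ := real_inner_le_norm _ _
        _ ≤ (μ' * ‖x n - z‖) * ‖x n - z‖ := by
            gcongr
            exact (W n).le_of_opNorm_le (hμ' n) _
        _ = μ' * ‖x n - z‖ ^ 2 := by ring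
    set Θ : ℝ := Real.exp (∑' n, η n) with hΘdef
    have hΘ1 : 1 ≤ Θ := Real.one_le_exp (tsum_nonneg hη0)
    have hΘpos : 0 < Θ := lt_of_lt_of_le one_pos hΘ1
    -- partial products bounded by Θ
    have sqrt_bound : ∀ a c : ℝ, 0 ≤ a → a ^ 2 ≤ c → a ≤ Real.sqrt c := by
      intro a c ha h
      have := Real.sqrt_le_sqrt h
      rwa [Real.sqrt_sq ha] at this
    have hP1 : ∀ s : Finset ℕ, 1 ≤ ∏ j ∈ s, (1 + η j) := by
      intro s
      calc (1:ℝ) = ∏ _j ∈ s, (1:ℝ) := by simp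
        _ ≤ ∏ j ∈ s, (1 + η j) := by
            apply Finset.prod_le_prod (fun j _ => zero_le_one)
            intro j _
            linarith [hη0 j]
    have hPΘ : ∀ s : Finset ℕ, ∏ j ∈ s, (1 + η j) ≤ Θ := by
      intro s
      calc ∏ j ∈ s, (1 + η j) ≤ ∏ j ∈ s, Real.exp (η j) := by
            apply Finset.prod_le_prod (fun j _ => by linarith [hη0 j])
            intro j _
            linarith [Real.add_one_le_exp (η j)]
        _ = Real.exp (∑ j ∈ s, η j) := (Real.exp_sum s η).symm
        _ ≤ Θ := by
            rw [hΘdef]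
            exact Real.exp_le_exp.mpr (hηs.sum_le_tsum s (fun i _ => hη0 i))
    -- tail sums of ε
    set E : ℕ → ℝ := fun n => ∑' j, ε (j + n) with hEdef
    have hεshift : ∀ n, Summable fun j => ε (j + n) := fun n => (summable_nat_add_iff n).mpr hεs
    have hE0 : ∀ n, 0 ≤ E n := fun n => tsum_nonneg (fun j => hε0 _)
    have hEtend : Filter.Tendsto E Filter.atTop (nhds 0) := by
      have h1 : ∀ n, E n = (∑' j, ε j) - ∑ i ∈ Finset.range n, ε i := by
        intro n
        have := hεs.sum_add_tsum_nat_add n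
        simp only [hEdef]
        linarith
      have h2 : Filter.Tendsto (fun n => (∑' j, ε j) - ∑ i ∈ Finset.range n, ε i)
          Filter.atTop (nhds ((∑' j, ε j) - ∑' j, ε j)) :=
        Filter.Tendsto.sub tendsto_const_nhds hεs.hasSum.tendsto_sum_nat
      rw [sub_self] at h2
      exact h2.congr (fun n => (h1 n).symm)
    -- key recursive bound
    have claimA : ∀ z ∈ C, ∀ n m : ℕ, n ≤ m →
        φ m z ≤ (∏ j ∈ Finset.Ico n m, (1 + η j)) * (φ n z + ∑ j ∈ Finset.Ico n m, ε j) := by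
      intro z hz n m hnm
      induction m, hnm using Nat.le_induction with
      | base => simp
      | succ m hnm ih =>
        have hrec := hQF z hz m
        have hP := hP1 (Finset.Ico n m)
        have hS : 0 ≤ ∑ j ∈ Finset.Ico n m, ε j := Finset.sum_nonneg (fun j _ => hε0 j)
        rw [Finset.prod_Ico_succ_top hnm, Finset.sum_Ico_succ_top hnm]
        have hφn := hφ0 n z
        have hηm := hη0 m
        have hεm := hε0 m
        have hφm := hφ0 m z
        nlinarith [mul_le_mul_of_nonneg_left ih (by linarith : (0:ℝ) ≤ 1 + η m),
          mul_le_mul_of_nonneg_right hP hεm]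
    -- uniform bound
    have claimB : ∀ z ∈ C, ∀ n m : ℕ, n ≤ m → φ m z ≤ Θ * (φ n z + E n) := by
      intro z hz n m hnm
      refine (claimA z hz n m hnm).trans ?_
      have hS : 0 ≤ ∑ j ∈ Finset.Ico n m, ε j := Finset.sum_nonneg (fun j _ => hε0 j)
      have hSE : ∑ j ∈ Finset.Ico n m, ε j ≤ E n := by
        rw [Finset.sum_Ico_eq_sum_range]
        simp only [hEdef]
        have : ∀ i, ε (n + i) = (fun j => ε (j + n)) i := fun i => by rw [add_comm]
        calc ∑ i ∈ Finset.range (m - n), ε (n + i)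
            = ∑ i ∈ Finset.range (m - n), ε (i + n) := by
              apply Finset.sum_congr rfl; intro i _; rw [add_comm]
          _ ≤ ∑' j, ε (j + n) := (hεshift n).sum_le_tsum _ (fun i _ => hε0 _)
      have := hPΘ (Finset.Ico n m)
      have hφn := hφ0 n z
      have hEn := hE0 n
      nlinarith [hP1 (Finset.Ico n m)]
    -- Cauchy sequence
    obtain ⟨z₀, hz₀⟩ := id hC
    have hbdd : ∀ n, Metric.infDist (x n) C ≤ Real.sqrt (Θ * (φ 0 z₀ + E 0) / α) := by
      intro n
      refine (Metric.infDist_le_dist_of_mem hz₀).trans ?_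
      rw [dist_eq_norm]
      apply sqrt_bound _ _ (norm_nonneg _)
      rw [div_eq_inv_mul, ← mul_le_mul_iff_right₀ hα, ← mul_assoc, ← mul_assoc,
        mul_inv_cancel₀ (ne_of_gt hα), one_mul]
      exact (hφlb n z₀).trans (claimB z₀ hz₀ 0 n (Nat.zero_le n))
    have hfreq : ∀ δ : ℝ, 0 < δ → ∃ᶠ n in Filter.atTop, Metric.infDist (x n) C < δ := by
      intro δ hδ
      apply Filter.frequently_lt_of_liminf_lt
      · exact Filter.isCoboundedUnder_ge_of_le _ hbdd
      · rw [hliminf]; exact hδ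
    have hcauchy : CauchySeq x := by
      rw [Metric.cauchySeq_iff']
      intro δ hδ
      set t : ℝ := α * (δ / 3) ^ 2 / (2 * Θ) with htdef
      have ht : 0 < t := by positivity
      -- find N with E N < t and infDist (x N) C small
      have hEev : ∀ᶠ n in Filter.atTop, E n < t := hEtend.eventually (gt_mem_nhds ht)
      set r : ℝ := Real.sqrt (t / μ') with hrdef
      have hr : 0 < r := Real.sqrt_pos.mpr (by positivity)
      obtain ⟨N, hEN, hdN⟩ := ((hfreq r hr).and_eventually hEev).exists
      obtain ⟨z, hzC, hz⟩ := (Metric.infDist_lt_iff hC).mp hEN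
      refine ⟨N, fun m hm => ?_⟩
      -- bound ‖x m - z‖ for all m ≥ N
      have key : ∀ k, N ≤ k → ‖x k - z‖ ≤ δ / 3 := by
        intro k hk
        have h1 : α * ‖x k - z‖ ^ 2 ≤ Θ * (φ N z + E N) := (hφlb k z).trans (claimB z hzC N k hk)
        have h2 : φ N z ≤ μ' * ‖x N - z‖ ^ 2 := hφub N z
        have h3 : ‖x N - z‖ ^ 2 < r ^ 2 := by
          have h4 : ‖x N - z‖ < r := by rwa [dist_eq_norm] at hz
          have := norm_nonneg (x N - z)
          nlinarith
        have hr2 : r ^ 2 = t / μ' := Real.sq_sqrt (by positivity)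
        have h5 : μ' * ‖x N - z‖ ^ 2 < t := by
          have := mul_lt_mul_of_pos_left h3 hμ'pos
          rwa [hr2, mul_div_cancel₀ _ (ne_of_gt hμ'pos)] at this
        have h6 : α * ‖x k - z‖ ^ 2 ≤ Θ * (t + t) := by
          refine h1.trans ?_
          have : φ N z + E N ≤ t + t := by linarith
          exact mul_le_mul_of_nonneg_left this (le_of_lt hΘpos)
        have h7 : Θ * (t + t) = α * (δ / 3) ^ 2 := by
          rw [htdef]; field_simp; ring
        have h8 : ‖x k - z‖ ^ 2 ≤ (δ / 3) ^ 2 := by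
          rw [h7] at h6
          exact le_of_mul_le_mul_left (by linarith) hα
        have h9 := sqrt_bound _ _ (norm_nonneg (x k - z)) h8
        rwa [Real.sqrt_sq (by positivity : (0:ℝ) ≤ δ / 3)] at h9
      calc dist (x m) (x N) ≤ dist (x m) z + dist z (x N) := dist_triangle _ _ _
        _ = ‖x m - z‖ + ‖x N - z‖ := by rw [dist_eq_norm, dist_comm, dist_eq_norm]
        _ ≤ δ / 3 + δ / 3 := add_le_add (key m hm) (key N le_rfl)
        _ < δ := by linarith
    obtain ⟨p, hp⟩ := cauchySeq_tendsto_of_complete hcauchy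
    refine ⟨p, ?_, hp⟩
    have : Metric.infDist p C = 0 := by rw [← hlim_of_tendsto p hp]; exact hliminf
    exact (hCcl.mem_iff_infDist_zero hC).mpr this
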